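/- Let k₁₁, k₁₂, k₂₂, k₃₁, k₃₃ ∈ ℝ with k₃₃ > 0 or k₁₁ + k₂₂ > 0, and let A₅ be the real 3×3 matrix with rows (k₁₁, k₁₂, 0), (k₁₂, k₂₂, 0), (k₃₁, 0, k₃₃). Then A₅ has a real eigenvalue λ > 0, i.e. there exists λ > 0 with det(A₅ − λ·I) = 0. -/
import Mathlib


/-- The instability assertion of Theorem 5.5: if `k₃₃ > 0` or `k₁₁ + k₂₂ > 0`, then the
linearization matrix `A₅` of system (1.1) at `E₅(x̄₁, x̄₂, 0)` has a positive real
eigenvalue. -/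
theorem A5_has_pos_eigenvalue (k₁₁ k₁₂ k₂₂ k₃₁ k₃₃ : ℝ)
    (h : 0 < k₃₃ ∨ 0 < k₁₁ + k₂₂) :
    ∃ l : ℝ, 0 < l ∧
      ((!![k₁₁, k₁₂, 0; k₁₂, k₂₂, 0; k₃₁, 0, k₃₃] : Matrix (Fin 3) (Fin 3) ℝ)
          - l • (1 : Matrix (Fin 3) (Fin 3) ℝ)).det = 0 := by
  have key : ∀ l : ℝ,
      ((!![k₁₁, k₁₂, 0; k₁₂, k₂₂, 0; k₃₁, 0, k₃₃] : Matrix (Fin 3) (Fin 3) ℝ)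
          - l • (1 : Matrix (Fin 3) (Fin 3) ℝ)).det
        = (k₃₃ - l) * ((k₁₁ - l) * (k₂₂ - l) - k₁₂ * k₁₂) := by
    intro l
    have : ((!![k₁₁, k₁₂, 0; k₁₂, k₂₂, 0; k₃₁, 0, k₃₃] : Matrix (Fin 3) (Fin 3) ℝ)
          - l • (1 : Matrix (Fin 3) (Fin 3) ℝ))
        = !![k₁₁ - l, k₁₂, 0; k₁₂, k₂₂ - l, 0; k₃₁, 0, k₃₃ - l] := by
      ext i j
      fin_cases i <;> fin_cases j <;>
        simp [Matrix.one_apply]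
    rw [this, Matrix.det_fin_three]
    simp
    ring
  rcases h with h | h
  · exact ⟨k₃₃, h, by rw [key]; ring⟩
  · set D := (k₁₁ - k₂₂) ^ 2 + 4 * k₁₂ ^ 2 with hD
    have hD0 : 0 ≤ D := by positivity
    have hs : Real.sqrt D ^ 2 = D := Real.sq_sqrt hD0
    have hge : Real.sqrt D ≥ 0 := Real.sqrt_nonneg _
    refine ⟨((k₁₁ + k₂₂) + Real.sqrt D) / 2, by linarith, ?_⟩
    rw [key]
    have : (k₁₁ - ((k₁₁ + k₂₂) + Real.sqrt D) / 2) * (k₂₂ - ((k₁₁ + k₂₂) + Real.sqrt D) / 2)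
        - k₁₂ * k₁₂ = 0 := by nlinarith [hs]
    rw [this]; ring
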